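/- Let E be a real inner product space, φ : E → ℝ a convex function, and g : E → E a map such that φ has gradient g z at every point z ∈ E (HasGradientAt φ (g z) z for all z). Then for every k, every z : Fin k → E, and every permutation π of Fin k, ∑_{i} ‖g (z i) − z i‖² ≤ ∑_{i} ‖g (z i) − z (π i)‖². In other words, the identity pairing (z i, g (z i)) is an optimal coupling, minimizing the sum of squared distances between the points g(z_1),…,g(z_k) and the points z_1,…,z_k over all permutations. -/

import Mathlib

open scoped BigOperators

private lemma subgrad {E : Type*} [NormedAddCommGroup E] [InnerProductSpace ℝ E] [CompleteSpace E]
    (φ : E → ℝ) (v x : E) (hφ : ConvexOn ℝ Set.univ φ)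
    (hx : HasGradientAt φ v x) (y : E) :
    φ x + inner ℝ v (y - x) ≤ φ y := by
  set ψ : ℝ → ℝ := fun t => φ (AffineMap.lineMap x y t) with hψ
  have hconv : ConvexOn ℝ Set.univ ψ := by
    have := hφ.comp_affineMap (AffineMap.lineMap x y : ℝ →ᵃ[ℝ] E)
    exact this
  have hcurve : HasDerivAt (fun t : ℝ => x + t • (y - x)) (y - x) 0 := by
    have h1 : HasDerivAt (fun t : ℝ => t • (y - x)) ((1 : ℝ) • (y - x)) 0 :=
      (hasDerivAt_id (0 : ℝ)).smul_const (y - x)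
    simpa using h1.const_add x
  have hfd : HasFDerivAt φ (InnerProductSpace.toDual ℝ E v) x := hx.hasFDerivAt
  have hψd : HasDerivAt ψ (inner ℝ v (y - x) : ℝ) 0 := by
    have hfd' : HasFDerivAt φ (InnerProductSpace.toDual ℝ E v) ((fun t : ℝ => x + t • (y - x)) 0) := by
      simpa using hfd
    have h2 := hfd'.comp_hasDerivAt 0 hcurve
    have heq : ψ = φ ∘ (fun t : ℝ => x + t • (y - x)) := by
      funext t
      simp [hψ, AffineMap.lineMap_apply, add_comm]
    rw [heq]
    simpa [InnerProductSpace.toDual_apply_apply] using h2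
  have := hconv.le_slope_of_hasDerivAt (Set.mem_univ (0:ℝ)) (Set.mem_univ (1:ℝ))
    one_pos hψd
  rw [slope_def_field] at this
  have h0 : ψ 0 = φ x := by simp [hψ]
  have h1 : ψ 1 = φ y := by simp [hψ]
  rw [h0, h1] at this
  simp only [div_one, sub_zero] at this
  linarith

/-- Claim (zZ) in the proof of Proposition 2.2(i): the identity pairing
`(z i, g (z i))` with `g` the gradient of a convex function is an optimal coupling,
minimizing the sum of squared distances over all permutations. -/
theorem gradient_convex_identity_optimal_coupling
    {E : Type*} [NormedAddCommGroup E] [InnerProductSpace ℝ E] [CompleteSpace E]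
    (φ : E → ℝ) (g : E → E)
    (hφ : ConvexOn ℝ Set.univ φ)
    (hg : ∀ z : E, HasGradientAt φ (g z) z) :
    ∀ (k : ℕ) (z : Fin k → E) (π : Equiv.Perm (Fin k)),
      (∑ i, ‖g (z i) - z i‖ ^ 2) ≤ ∑ i, ‖g (z i) - z (π i)‖ ^ 2 := by
  intro k z π
  -- cyclic monotonicity
  have hkey : ∑ i, (inner ℝ (g (z i)) (z (π i) - z i) : ℝ) ≤ 0 := by
    have h1 : ∀ i, φ (z i) + inner ℝ (g (z i)) (z (π i) - z i) ≤ φ (z (π i)) :=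
      fun i => subgrad φ (g (z i)) (z i) hφ (hg (z i)) (z (π i))
    have h2 : ∑ i, (φ (z i) + (inner ℝ (g (z i)) (z (π i) - z i) : ℝ))
        ≤ ∑ i, φ (z (π i)) := Finset.sum_le_sum fun i _ => h1 i
    rw [Finset.sum_add_distrib] at h2
    have h3 : ∑ i, φ (z (π i)) = ∑ i, φ (z i) :=
      Equiv.sum_comp π (fun i => φ (z i))
    linarith
  have hnorm : ∑ i, ‖z (π i)‖ ^ 2 = ∑ i, ‖z i‖ ^ 2 :=
    Equiv.sum_comp π (fun i => ‖z i‖ ^ 2)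
  have expand : ∀ (a b : E), ‖a - b‖ ^ 2
      = ‖a‖ ^ 2 - 2 * inner ℝ a b + ‖b‖ ^ 2 := fun a b => by
    rw [norm_sub_sq_real]
  calc (∑ i, ‖g (z i) - z i‖ ^ 2)
      = ∑ i, (‖g (z i)‖ ^ 2 - 2 * inner ℝ (g (z i)) (z i) + ‖z i‖ ^ 2) := by
        simp_rw [expand]
    _ ≤ ∑ i, (‖g (z i)‖ ^ 2 - 2 * inner ℝ (g (z i)) (z (π i)) + ‖z (π i)‖ ^ 2) := by
        rw [Finset.sum_add_distrib, Finset.sum_add_distrib, hnorm]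
        simp_rw [Finset.sum_sub_distrib]
        have : ∑ i, (inner ℝ (g (z i)) (z (π i)) : ℝ)
            ≤ ∑ i, (inner ℝ (g (z i)) (z i) : ℝ) := by
          have := hkey
          simp_rw [inner_sub_right, Finset.sum_sub_distrib] at this
          linarith
        simp_rw [← Finset.mul_sum]
        linarith
    _ = ∑ i, ‖g (z i) - z (π i)‖ ^ 2 := by simp_rw [expand]
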